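/- arXiv:2311.16779 — 7 statements merged into one kernel-verified Lean document; each statement's English description precedes it below -/
import Mathlib

section
/- Let f be a non-zero vector of a metric vector space (V,Q) such that f ∉ V^⊥ and Q(f) ≠ 0. Then ΔO(V,Q,f) = ΔO'(V,Q,f) = {id_V, ξ_f}, and ξ_f ≠ id_V. -/
/-! Setting: a field `F`, a finite-dimensional `F`-vector space `V`, a quadratic form
`Q : V → F` with polar form `B = QuadraticMap.polar Q` (the bilinear map `Q.polarBilin`),
induced map `D = Q.polarBilin : V →ₗ[F] Module.Dual F V`, and radical
`V^⊥ = LinearMap.ker Q.polarBilin`. -/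

variable {F V : Type*} [Field F] [AddCommGroup V] [Module F V] [FiniteDimensional F V]

/-- The map `δ_{c*,f} : x ↦ x + ⟨c*,x⟩ • f`. -/
def deltaMap (c : Module.Dual F V) (f : V) : V →ₗ[F] V :=
  LinearMap.id + c.smulRight f

/-- The orthogonal group `O(V,Q)`, as a set of linear endomorphisms. -/
def orthSet (Q : QuadraticForm F V) : Set (V →ₗ[F] V) :=
  {φ | Function.Bijective φ ∧ ∀ x, Q (φ x) = Q x}

/-- The weak orthogonal group `O'(V,Q)`: isometries fixing the radical elementwise. -/
def wOrthSet (Q : QuadraticForm F V) : Set (V →ₗ[F] V) :=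
  {φ | Function.Bijective φ ∧ (∀ x, Q (φ x) = Q x) ∧
    ∀ x ∈ LinearMap.ker Q.polarBilin, φ x = x}

/-- The group `Δ(V,f) = {δ_{a*,f} : a* ∈ V*, ⟨a*,f⟩ ≠ -1}`. -/
def deltaSet (f : V) : Set (V →ₗ[F] V) :=
  {φ | ∃ a : Module.Dual F V, a f ≠ -1 ∧ φ = deltaMap a f}

/-- The `Q`-reflection `ξ_r : x ↦ x - Q(r)⁻¹ • B(r,x) • r` in the direction of `r`. -/
noncomputable def xiMap (Q : QuadraticForm F V) (r : V) : V →ₗ[F] V :=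
  LinearMap.id - (Q r)⁻¹ • (Q.polarBilin r).smulRight r

open QuadraticMap

lemma deltaMap_apply' (a : Module.Dual F V) (f x : V) : deltaMap a f x = x + a x • f := by
  simp [deltaMap]

lemma xiMap_apply' (Q : QuadraticForm F V) (f x : V) :
    xiMap Q f x = x - ((Q f)⁻¹ * polar Q f x) • f := by
  simp [xiMap, polarBilin_apply_apply, smul_smul]

lemma Q_deltaMap (Q : QuadraticForm F V) (a : Module.Dual F V) (f x : V) :
    Q (deltaMap a f x) = Q x + a x * polar Q f x + a x * a x * Q f := by
  rw [deltaMap_apply']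
  have h1 : Q (x + a x • f) = Q x + Q (a x • f) + polar Q x (a x • f) := by
    rw [polar]; ring
  rw [h1, QuadraticMap.map_smul, polar_smul_right, polar_comm]
  simp only [smul_eq_mul]
  ring

lemma xi_eq_delta (Q : QuadraticForm F V) (f : V) :
    xiMap Q f = deltaMap (-(Q f)⁻¹ • Q.polarBilin f) f := by
  ext x
  rw [xiMap_apply', deltaMap_apply']
  simp only [LinearMap.smul_apply, polarBilin_apply_apply, smul_eq_mul]
  module

lemma polar_self' (Q : QuadraticForm F V) (f : V) : polar Q f f = 2 * Q f := by
  rw [polar_self, two_smul, two_mul]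

/-- Lemma 3.1(a): if `f ∉ V^⊥` and `Q f ≠ 0`, then
`ΔO(V,Q,f) = ΔO'(V,Q,f) = {id, ξ_f}` and `ξ_f ≠ id`. -/
theorem stmt0 (Q : QuadraticForm F V) (f : V) (hf : f ≠ 0)
    (hfrad : f ∉ LinearMap.ker Q.polarBilin) (hQf : Q f ≠ 0) :
    deltaSet f ∩ orthSet Q = ({LinearMap.id, xiMap Q f} : Set (V →ₗ[F] V)) ∧
    deltaSet f ∩ wOrthSet Q = ({LinearMap.id, xiMap Q f} : Set (V →ₗ[F] V)) ∧
    xiMap Q f ≠ LinearMap.id := by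
  set b : Module.Dual F V := -(Q f)⁻¹ • Q.polarBilin f with hb
  have hbapp : ∀ x, b x = -(Q f)⁻¹ * polar Q f x := by
    intro x; simp [hb, polarBilin_apply_apply]
  -- ξ_f ≠ id
  have hxine : xiMap Q f ≠ LinearMap.id := by
    intro h
    apply hfrad
    rw [LinearMap.mem_ker]
    ext y
    by_contra hy
    have hy' : polar Q f y ≠ 0 := by simpa [polarBilin_apply_apply] using hy
    have := LinearMap.ext_iff.mp h y
    rw [xiMap_apply'] at this
    simp only [LinearMap.id_coe, id_eq] at this
    have h0 : ((Q f)⁻¹ * polar Q f y) • f = 0 := by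
      have := sub_eq_self.mp this; exact this
    rcases smul_eq_zero.mp h0 with hc | hc
    · exact hy' (by
        rcases mul_eq_zero.mp hc with h1 | h1
        · exact absurd h1 (inv_ne_zero hQf)
        · exact h1)
    · exact hf hc
  -- ξ_f involutive hence bijective
  have hinvol : Function.Involutive (xiMap Q f) := by
    intro x
    rw [xiMap_apply', xiMap_apply' Q f x]
    have hpol : polar Q f (x - ((Q f)⁻¹ * polar Q f x) • f)
        = polar Q f x - ((Q f)⁻¹ * polar Q f x) * (2 * Q f) := by
      rw [polar_sub_right, polar_smul_right, polar_self']
      simp [smul_eq_mul]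
    rw [hpol]
    have : ((Q f)⁻¹ * (polar Q f x - (Q f)⁻¹ * polar Q f x * (2 * Q f)))
        = -((Q f)⁻¹ * polar Q f x) := by
      field_simp
      ring
    rw [this]
    module
  -- ξ_f is an isometry
  have hxiso : ∀ x, Q (xiMap Q f x) = Q x := by
    intro x
    rw [xi_eq_delta, Q_deltaMap]
    have : (-(Q f)⁻¹ • Q.polarBilin f) x = -(Q f)⁻¹ * polar Q f x := by
      simp [polarBilin_apply_apply]
    rw [this]
    field_simp
    ring
  -- ξ_f fixes the radical
  have hxirad : ∀ x ∈ LinearMap.ker Q.polarBilin, xiMap Q f x = x := by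
    intro x hx
    rw [LinearMap.mem_ker] at hx
    have : polar Q f x = 0 := by
      rw [polar_comm]
      have := congrFun (congrArg (fun g : Module.Dual F V => (g : V → F)) hx) f
      simpa [polarBilin_apply_apply] using this
    rw [xiMap_apply', this]
    simp
  -- b f = -2 ≠ -1
  have hbf : b f = -2 := by
    rw [hbapp, polar_self']
    field_simp
  have hbfne : b f ≠ -1 := by
    rw [hbf]
    intro h
    have h2 : (2 : F) = 1 := neg_injective h
    exact one_ne_zero (α := F) (by linear_combination h2)
  -- id and ξ_f are in both intersections
  have hid_delta : LinearMap.id ∈ deltaSet (F := F) f := by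
    refine ⟨0, by simp, ?_⟩
    ext x; simp [deltaMap]
  have hxi_delta : xiMap Q f ∈ deltaSet f := ⟨b, hbfne, xi_eq_delta Q f⟩
  have hid_w : LinearMap.id ∈ wOrthSet Q := ⟨Function.bijective_id, by simp, by simp⟩
  have hxi_w : xiMap Q f ∈ wOrthSet Q := ⟨hinvol.bijective, hxiso, hxirad⟩
  -- forward direction
  have hfwd : deltaSet f ∩ orthSet Q ⊆ ({LinearMap.id, xiMap Q f} : Set (V →ₗ[F] V)) := by
    rintro φ ⟨⟨a, haf, rfl⟩, _, hiso⟩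
    have H : ∀ x, a x = 0 ∨ a x = b x := by
      intro x
      have h1 := hiso x
      rw [Q_deltaMap] at h1
      have h2 : a x * (polar Q f x + a x * Q f) = 0 := by linear_combination h1
      rcases mul_eq_zero.mp h2 with h | h
      · exact Or.inl h
      · right
        rw [hbapp]
        have hx : a x * Q f = -polar Q f x := by linear_combination h
        calc a x = a x * Q f * (Q f)⁻¹ := by field_simp
          _ = -polar Q f x * (Q f)⁻¹ := by rw [hx]
          _ = -(Q f)⁻¹ * polar Q f x := by ring
    by_cases ha : a = 0
    · left
      subst ha
      ext x; simp [deltaMap]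
    · right
      have hab : a = b := by
        by_contra hab
        obtain ⟨x0, hx0⟩ : ∃ x, a x ≠ 0 := by
          by_contra h; push_neg at h; exact ha (LinearMap.ext h)
        obtain ⟨y0, hy0⟩ : ∃ y, a y ≠ b y := by
          by_contra h; push_neg at h; exact hab (LinearMap.ext h)
        have hx0b : a x0 = b x0 := (H x0).resolve_left hx0
        have hy00 : a y0 = 0 := (H y0).resolve_right hy0
        rcases H (x0 + y0) with h | h
        · rw [map_add, hy00, add_zero] at h; exact hx0 h
        · rw [map_add, map_add, hy00, add_zero, hx0b] at h
          have : b y0 = 0 := by linear_combination -h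
          exact hy0 (hy00.trans this.symm)
      subst hab
      exact (xi_eq_delta Q f).symm
  refine ⟨?_, ?_, hxine⟩
  · apply Set.Subset.antisymm hfwd
    rintro φ (rfl | rfl)
    · exact ⟨hid_delta, hid_w.1, hid_w.2.1⟩
    · exact ⟨hxi_delta, hxi_w.1, hxi_w.2.1⟩
  · apply Set.Subset.antisymm
    · intro φ ⟨h1, h2⟩
      exact hfwd ⟨h1, h2.1, h2.2.1⟩
    · rintro φ (rfl | rfl)
      · exact ⟨hid_delta, hid_w⟩
      · exact ⟨hxi_delta, hxi_w⟩
end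

section
/- Let f be a non-zero vector of a metric vector space (V,Q) such that f ∉ V^⊥ and Q(f) = 0. Then ΔO(V,Q,f) = ΔO'(V,Q,f) = {id_V}. -/
/-! Setting: a field `F`, a finite-dimensional `F`-vector space `V`, a quadratic form
`Q : V → F` with polar form `B = QuadraticMap.polar Q` (the bilinear map `Q.polarBilin`),
induced map `D = Q.polarBilin : V →ₗ[F] Module.Dual F V`, and radical
`V^⊥ = LinearMap.ker Q.polarBilin`. -/

variable {F V : Type*} [Field F] [AddCommGroup V] [Module F V] [FiniteDimensional F V]

lemma key_aux (Q : QuadraticForm F V) (f : V)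
    (hfrad : f ∉ LinearMap.ker Q.polarBilin) (hQf : Q f = 0)
    {φ : V →ₗ[F] V} (hΔ : φ ∈ deltaSet f) (hO : ∀ x, Q (φ x) = Q x) :
    φ = LinearMap.id := by
  obtain ⟨a, ha, rfl⟩ := hΔ
  -- from the isometry condition: a x * polar Q x f = 0 for all x
  have h : ∀ x, a x * QuadraticMap.polar Q x f = 0 := by
    intro x
    have := hO x
    simp only [deltaMap, LinearMap.add_apply, LinearMap.id_apply,
      LinearMap.smulRight_apply] at this
    have hexp : Q (x + a x • f) = Q x + Q (a x • f) + QuadraticMap.polar Q x (a x • f) := by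
      simp [QuadraticMap.polar]
    rw [hexp, QuadraticMap.map_smul, hQf, QuadraticMap.polar_smul_right] at this
    simpa [smul_eq_mul] using this
  -- pick x₀ with polar Q x₀ f ≠ 0
  have hD : Q.polarBilin f ≠ 0 := by simpa [LinearMap.mem_ker] using hfrad
  obtain ⟨y, hy⟩ : ∃ y, QuadraticMap.polar Q f y ≠ 0 := by
    by_contra hc
    push_neg at hc
    exact hD (LinearMap.ext fun y => by simpa using hc y)
  have hy' : QuadraticMap.polar Q y f ≠ 0 := by rwa [QuadraticMap.polar_comm]
  have hay : a y = 0 := by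
    have := h y
    exact (mul_eq_zero.1 this).resolve_right hy'
  have haz : a = 0 := by
    ext x
    by_cases hx : QuadraticMap.polar Q x f = 0
    · have := h (x + y)
      rw [QuadraticMap.polar_add_left, hx, zero_add, map_add, hay, add_zero] at this
      exact (mul_eq_zero.1 this).resolve_right hy'
    · exact (mul_eq_zero.1 (h x)).resolve_right hx
  subst haz
  ext x
  simp [deltaMap]

/-- Lemma 3.1(b): if `f ∉ V^⊥` and `Q f = 0`, then `ΔO(V,Q,f) = ΔO'(V,Q,f) = {id}`. -/
theorem stmt1 (Q : QuadraticForm F V) (f : V) (hf : f ≠ 0)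
    (hfrad : f ∉ LinearMap.ker Q.polarBilin) (hQf : Q f = 0) :
    deltaSet f ∩ orthSet Q = ({LinearMap.id} : Set (V →ₗ[F] V)) ∧
    deltaSet f ∩ wOrthSet Q = ({LinearMap.id} : Set (V →ₗ[F] V)) := by
  have hid : (LinearMap.id : V →ₗ[F] V) ∈ deltaSet f := by
    refine ⟨0, by simp, ?_⟩
    ext x; simp [deltaMap]
  constructor
  · ext φ
    constructor
    · rintro ⟨hΔ, hb, hO⟩
      exact key_aux Q f hfrad hQf hΔ hO
    · rintro rfl
      exact ⟨hid, Function.bijective_id, fun x => rfl⟩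
  · ext φ
    constructor
    · rintro ⟨hΔ, hb, hO, _⟩
      exact key_aux Q f hfrad hQf hΔ hO
    · rintro rfl
      exact ⟨hid, Function.bijective_id, fun x => rfl, fun x _ => rfl⟩
end

section
/- Let f be a non-zero vector of a metric vector space (V,Q) such that f ∈ V^⊥ and Q(f) ≠ 0. Then ΔO(V,Q,f) = ΔO'(V,Q,f) = {id_V}. -/
/-! Setting: a field `F`, a finite-dimensional `F`-vector space `V`, a quadratic form
`Q : V → F` with polar form `B = QuadraticMap.polar Q` (the bilinear map `Q.polarBilin`),
induced map `D = Q.polarBilin : V →ₗ[F] Module.Dual F V`, and radical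
`V^⊥ = LinearMap.ker Q.polarBilin`. -/

variable {F V : Type*} [Field F] [AddCommGroup V] [Module F V] [FiniteDimensional F V]

lemma deltaMap_zero (f : V) : deltaMap (0 : Module.Dual F V) f = LinearMap.id := by
  ext x; simp [deltaMap]

lemma id_mem_delta (f : V) : (LinearMap.id : V →ₗ[F] V) ∈ deltaSet f := by
  refine ⟨0, by simp, (deltaMap_zero f).symm⟩

lemma key (Q : QuadraticForm F V) (f : V)
    (hfrad : f ∈ LinearMap.ker Q.polarBilin) (hQf : Q f ≠ 0)
    (a : Module.Dual F V) (φ : V →ₗ[F] V) (hφ : φ = deltaMap a f)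
    (hiso : ∀ x, Q (φ x) = Q x) : φ = LinearMap.id := by
  have hB : ∀ x, QuadraticMap.polar Q x f = 0 := by
    intro x
    have : Q.polarBilin f = 0 := LinearMap.mem_ker.mp hfrad
    have h0 : QuadraticMap.polar Q f x = 0 := by
      simpa using congrArg (fun g => g x) this
    rw [QuadraticMap.polar_comm]; exact h0
  have ha : a = 0 := by
    ext x
    have h := hiso x
    rw [hφ] at h
    simp only [deltaMap, LinearMap.add_apply, LinearMap.id_apply,
      LinearMap.smulRight_apply] at h
    have hexp : Q (x + a x • f) = Q x + Q (a x • f) + QuadraticMap.polar Q x (a x • f) := by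
      simp [QuadraticMap.polar]
    rw [hexp, QuadraticMap.polar_smul_right, hB, QuadraticMap.map_smul] at h
    simp only [smul_eq_mul, mul_zero, add_zero] at h
    have h0 : a x * a x * Q f = 0 := by
      have := sub_eq_zero.mpr h
      linear_combination this
    rcases mul_eq_zero.mp h0 with h1 | h1
    · rcases mul_eq_zero.mp h1 with h2 | h2 <;> simpa using h2
    · exact absurd h1 hQf
  rw [hφ, ha, deltaMap_zero]

/-- Lemma 3.1(c): if `f ∈ V^⊥` and `Q f ≠ 0`, then `ΔO(V,Q,f) = ΔO'(V,Q,f) = {id}`. -/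
theorem stmt2 (Q : QuadraticForm F V) (f : V) (hf : f ≠ 0)
    (hfrad : f ∈ LinearMap.ker Q.polarBilin) (hQf : Q f ≠ 0) :
    deltaSet f ∩ orthSet Q = ({LinearMap.id} : Set (V →ₗ[F] V)) ∧
    deltaSet f ∩ wOrthSet Q = ({LinearMap.id} : Set (V →ₗ[F] V)) := by
  constructor
  · ext φ
    constructor
    · rintro ⟨⟨a, -, hφ⟩, -, hiso⟩
      exact key Q f hfrad hQf a φ hφ hiso
    · rintro rfl
      exact ⟨id_mem_delta f, Function.bijective_id, fun x => rfl⟩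
  · ext φ
    constructor
    · rintro ⟨⟨a, -, hφ⟩, -, hiso, -⟩
      exact key Q f hfrad hQf a φ hφ hiso
    · rintro rfl
      exact ⟨id_mem_delta f, Function.bijective_id, fun x => rfl, fun x _ => rfl⟩
end

section
/- Let f be a non-zero vector of a metric vector space (V,Q) and let a* ∈ V* satisfy ⟨a*,f⟩ ≠ −1. Then (i) δ_{a*,f} ∈ O(V,Q) if and only if ⟨a*,x⟩ B(x,f) + ⟨a*,x⟩² Q(f) = 0 for all x ∈ V, and (ii) δ_{a*,f} ∈ O'(V,Q) if and only if, in addition, ⟨a*,x⟩ = 0 for all x ∈ V^⊥. -/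
/-! Setting: a field `F`, a finite-dimensional `F`-vector space `V`, a quadratic form
`Q : V → F` with polar form `B = QuadraticMap.polar Q` (the bilinear map `Q.polarBilin`),
induced map `D = Q.polarBilin : V →ₗ[F] Module.Dual F V`, and radical
`V^⊥ = LinearMap.ker Q.polarBilin`. -/

variable {F V : Type*} [Field F] [AddCommGroup V] [Module F V] [FiniteDimensional F V]

set_option linter.unusedSectionVars false

lemma delta_apply (c : Module.Dual F V) (f : V) (x : V) :
    deltaMap c f x = x + c x • f := rfl

lemma delta_bij (c : Module.Dual F V) (f : V) (hc : c f ≠ -1) :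
    Function.Bijective (deltaMap c f) := by
  rw [Function.Bijective, ← LinearMap.injective_iff_surjective, and_self]
  intro x y h
  simp only [delta_apply] at h
  have h2 := congrArg c h
  simp only [map_add, map_smul, smul_eq_mul] at h2
  have hx : c x * (1 + c f) = c y * (1 + c f) := by linear_combination h2
  have hne : (1 : F) + c f ≠ 0 := by
    intro h0; apply hc; linear_combination h0
  have hxy : c x = c y := mul_right_cancel₀ hne hx
  rw [hxy] at h
  exact add_right_cancel h

lemma delta_Q (Q : QuadraticForm F V) (c : Module.Dual F V) (f : V) (x : V) :
    Q (deltaMap c f x) = Q x + (c x * Q.polarBilin x f + (c x) ^ 2 * Q f) := by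
  rw [delta_apply]
  have hp : Q (x + c x • f) = Q x + Q (c x • f) + QuadraticMap.polar (⇑Q) x (c x • f) := by
    simp [QuadraticMap.polar]
  rw [hp, QuadraticMap.polar_smul_right, QuadraticMap.map_smul]
  simp only [QuadraticMap.polarBilin_apply_apply, smul_eq_mul]
  ring

/-- Membership criteria for `δ_{a*,f}`: (i) `δ_{a*,f} ∈ O(V,Q)` iff
`⟨a*,x⟩ B(x,f) + ⟨a*,x⟩² Q(f) = 0` for all `x`; (ii) `δ_{a*,f} ∈ O'(V,Q)` iff, in
addition, `a*` vanishes on the radical. -/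
theorem stmt5 (Q : QuadraticForm F V) (f : V) (hf : f ≠ 0)
    (a : Module.Dual F V) (ha : a f ≠ -1) :
    (deltaMap a f ∈ orthSet Q ↔
      ∀ x : V, a x * Q.polarBilin x f + (a x) ^ 2 * Q f = 0) ∧
    (deltaMap a f ∈ wOrthSet Q ↔
      ((∀ x : V, a x * Q.polarBilin x f + (a x) ^ 2 * Q f = 0) ∧
        ∀ x ∈ LinearMap.ker Q.polarBilin, a x = 0)) := by
  have hbij := delta_bij a f ha
  have hQ : (∀ x, Q (deltaMap a f x) = Q x) ↔
      (∀ x : V, a x * Q.polarBilin x f + (a x) ^ 2 * Q f = 0) := by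
    constructor
    · intro h x
      have := h x
      rw [delta_Q] at this
      linear_combination this
    · intro h x
      rw [delta_Q, h x, add_zero]
  have hfix : (∀ x ∈ LinearMap.ker Q.polarBilin, deltaMap a f x = x) ↔
      (∀ x ∈ LinearMap.ker Q.polarBilin, a x = 0) := by
    constructor
    · intro h x hx
      have := h x hx
      rw [delta_apply] at this
      have h2 : a x • f = 0 := by
        have := congrArg (· - x) this
        simpa using this
      rcases smul_eq_zero.mp h2 with h | h
      · exact h
      · exact absurd h hf
    · intro h x hx
      rw [delta_apply, h x hx, zero_smul, add_zero]
  constructor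
  · constructor
    · rintro ⟨_, h⟩; exact hQ.mp h
    · intro h; exact ⟨hbij, hQ.mpr h⟩
  · constructor
    · rintro ⟨_, h1, h2⟩; exact ⟨hQ.mp h1, hfix.mp h2⟩
    · rintro ⟨h1, h2⟩; exact ⟨hbij, hQ.mpr h1, hfix.mpr h2⟩
end

section
/- Let f be a non-zero vector of a metric vector space (V,Q). Then for all s ∈ F with s ≠ 0 and s ≠ 1, and all non-zero a* ∈ V* with ⟨a*,f⟩ = 0, the mapping s·δ_{a*,f} ∈ GL(V) does not belong to O'(V,Q). -/
/-! Setting: a field `F`, a finite-dimensional `F`-vector space `V`, a quadratic form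
`Q : V → F` with polar form `B = QuadraticMap.polar Q` (the bilinear map `Q.polarBilin`),
induced map `D = Q.polarBilin : V →ₗ[F] Module.Dual F V`, and radical
`V^⊥ = LinearMap.ker Q.polarBilin`. -/

variable {F V : Type*} [Field F] [AddCommGroup V] [Module F V] [FiniteDimensional F V]

/-- Lemma 3.3: for a non-zero vector `f`, all `s ∈ F \ {0,1}` and all non-zero
`a* ∈ {f}°`, the mapping `s • δ_{a*,f}` does not belong to `O'(V,Q)`. -/
theorem stmt7 (Q : QuadraticForm F V) (f : V) (hf : f ≠ 0)
    (s : F) (hs0 : s ≠ 0) (hs1 : s ≠ 1)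
    (a : Module.Dual F V) (ha0 : a ≠ 0) (haf : a f = 0) :
    s • deltaMap a f ∉ wOrthSet Q := by
  rintro ⟨-, hQ, hfix⟩
  -- Step 1: the expanded isometry identity
  have key : ∀ x, s * s * (Q x + a x * a x * Q f + a x * QuadraticMap.polar Q x f) = Q x := by
    intro x
    have h := hQ x
    have hadd : Q (x + a x • f) = Q x + Q (a x • f) + QuadraticMap.polar (⇑Q) x (a x • f) := by
      simp [QuadraticMap.polar]
    rw [LinearMap.smul_apply] at h
    simp only [deltaMap, LinearMap.add_apply, LinearMap.id_apply, LinearMap.smulRight_apply] at h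
    rw [QuadraticMap.map_smul, hadd, QuadraticMap.map_smul, QuadraticMap.polar_smul_right] at h
    simp only [smul_eq_mul] at h
    linear_combination h
  -- Step 2: (s²-1) Q f = 0
  have hEf : (s * s - 1) * Q f = 0 := by
    have h := key f
    rw [haf] at h
    linear_combination h
  -- Step 3: polarization in the f-direction
  have h1 : ∀ x, (s * s - 1) * QuadraticMap.polar Q x f + 2 * (s * s) * a x * Q f = 0 := by
    intro x
    have hxf := key (x + f)
    have hx := key x
    have hff := key f
    have e1 : Q (x + f) = Q x + Q f + QuadraticMap.polar (⇑Q) x f := by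
      simp [QuadraticMap.polar]
    have e2 : QuadraticMap.polar (⇑Q) (x + f) f
        = QuadraticMap.polar (⇑Q) x f + 2 * Q f := by
      rw [QuadraticMap.polar_add_left, QuadraticMap.polar_self, two_smul ℕ]
      ring
    rw [show a (x + f) = a x + a f from map_add a x f, haf, add_zero, e1, e2] at hxf
    linear_combination hxf - hx - hEf
  -- Step 4: f is in the radical
  have hpol : ∀ x, QuadraticMap.polar Q x f = 0 := by
    by_cases hs2 : s * s - 1 = 0
    · -- s = -1 case, char ≠ 2
      have hQf : Q f = 0 := by
        obtain ⟨x0, hx0⟩ : ∃ x0, a x0 ≠ 0 := by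
          by_contra hc
          push_neg at hc
          exact ha0 (LinearMap.ext fun x => hc x)
        have h := h1 x0
        rw [hs2, zero_mul, zero_add] at h
        have hsq : s * s = 1 := by linear_combination hs2
        have h2 : (2 : F) ≠ 0 := by
          intro h2
          have hsneg : s = -1 := by
            rcases mul_self_eq_one_iff.mp hsq with h' | h'
            · exact absurd h' hs1
            · exact h'
          exact hs1 (by rw [hsneg]; linear_combination -h2)
        have h' : 2 * a x0 * Q f = 0 := by
          linear_combination h - 2 * a x0 * Q f * hs2
        rcases mul_eq_zero.mp h' with h'' | h''
        · rcases mul_eq_zero.mp h'' with h3 | h3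
          · exact absurd h3 h2
          · exact absurd h3 hx0
        · exact h''
      -- now ∀ x, a x * polar x f = 0
      have hsq : s * s = 1 := by linear_combination hs2
      have E2 : ∀ x, a x * QuadraticMap.polar Q x f = 0 := by
        intro x
        have h := key x
        rw [hQf, hsq] at h
        linear_combination h
      obtain ⟨x0, hx0⟩ : ∃ x0, a x0 ≠ 0 := by
        by_contra hc
        push_neg at hc
        exact ha0 (LinearMap.ext fun x => hc x)
      have hp0 : QuadraticMap.polar Q x0 f = 0 := by
        have := E2 x0
        exact (mul_eq_zero.mp this).resolve_left hx0
      intro x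
      have hxy := E2 (x + x0)
      have e1 : QuadraticMap.polar (⇑Q) (x + x0) f
          = QuadraticMap.polar (⇑Q) x f + QuadraticMap.polar (⇑Q) x0 f :=
        QuadraticMap.polar_add_left _ _ _ _
      rw [map_add, e1, hp0, add_zero] at hxy
      have hxx := E2 x
      have : a x0 * QuadraticMap.polar Q x f = 0 := by linear_combination hxy - hxx
      exact (mul_eq_zero.mp this).resolve_left hx0
    · have hQf : Q f = 0 := (mul_eq_zero.mp hEf).resolve_left hs2
      intro x
      have h := h1 x
      rw [hQf, mul_zero, add_zero] at h
      exact (mul_eq_zero.mp h).resolve_left hs2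
  -- Step 5: conclude
  have hmem : f ∈ LinearMap.ker Q.polarBilin := by
    rw [LinearMap.mem_ker]
    ext y
    simp only [QuadraticMap.polarBilin_apply_apply, LinearMap.zero_apply]
    rw [QuadraticMap.polar_comm]
    exact hpol y
  have h := hfix f hmem
  rw [LinearMap.smul_apply] at h
  simp only [deltaMap, LinearMap.add_apply, LinearMap.id_apply, LinearMap.smulRight_apply,
    haf, zero_smul, add_zero] at h
  have : (s - 1) • f = 0 := by rw [sub_smul, one_smul, h, sub_self]
  rcases smul_eq_zero.mp this with h' | h'
  · exact hs1 (by linear_combination h')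
  · exact hf h'
end

section
/- Let Q̃ : (F×V)* → F be a quadratic form with Q̃(1,0*) = 0 and with F·(1,0*) being the radical of its polar form B̃. Then the linear mapping π ∘ D̃ ∘ π^T : V* → V is invertible, and the quadratic form Q̃^↓ : V → F, Q̃^↓(x) := Q̃(0, (π ∘ D̃ ∘ π^T)⁻¹(x)), has a non-degenerate polar form. -/
/-! Setting: a field `F` and a finite-dimensional `F`-vector space `V`. The dual of
`F × V` is identified with `F × V*` via the pairing `⟨(a₀,a*),(x₀,x)⟩ = a₀x₀ + ⟨a*,x⟩`.
For a quadratic form `Q`, its polar form is `QuadraticMap.polar Q` (the bilinear map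
`Q.polarBilin`) and its radical is `LinearMap.ker Q.polarBilin`. -/

variable {F V : Type*} [Field F] [AddCommGroup V] [Module F V] [FiniteDimensional F V]

/-- The dual linear representation `β` of `AGL(V)` on `(F×V)* = F × V*`: for the affinity
`γ : x ↦ t + g x` (with `g ∈ GL(V)`, `t ∈ V`),
`γ^β (a₀, a*) = (a₀ - ⟨a* ∘ g⁻¹, t⟩, a* ∘ g⁻¹)`. -/
def betaMap (g : V ≃ₗ[F] V) (t : V) :
    (F × Module.Dual F V) →ₗ[F] (F × Module.Dual F V) :=
  LinearMap.prod
    (LinearMap.fst F F (Module.Dual F V) -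
      (Module.Dual.eval F V (g.symm t)).comp (LinearMap.snd F F (Module.Dual F V)))
    ((g.symm.toLinearMap.dualMap).comp (LinearMap.snd F F (Module.Dual F V)))

/-- Given a quadratic form `Q` on `V` whose induced map `D = Q.polarBilin` is bijective
(given here as the linear equivalence `e` with `↑e = Q.polarBilin`), the quadratic form
`Q^↑ : F × V* → F, (a₀, a*) ↦ Q (D⁻¹ a*)`. -/
def qUp (Q : QuadraticForm F V) (e : V ≃ₗ[F] Module.Dual F V) :
    QuadraticForm F (F × Module.Dual F V) :=
  Q.comp (e.symm.toLinearMap ∘ₗ LinearMap.snd F F (Module.Dual F V))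

/-- Given a quadratic form `Q̃` on `F × V*` such that `π ∘ D̃ ∘ π^T : V* → V` is invertible
(given here as the linear equivalence `T`, characterised by
`∀ a b, b (T a) = polar Q̃ (0,a) (0,b)`), the quadratic form
`Q̃^↓ : V → F, x ↦ Q̃ (0, T⁻¹ x)`. -/
def qDown (Qt : QuadraticForm F (F × Module.Dual F V)) (T : Module.Dual F V ≃ₗ[F] V) :
    QuadraticForm F V :=
  Qt.comp ((LinearMap.inr F F (Module.Dual F V)) ∘ₗ T.symm.toLinearMap)

/-- The weak orthogonal group `O'(W,Q)` of a metric vector space, as a set of linear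
endomorphisms: bijective isometries fixing the radical elementwise. -/
def wOrth {W : Type*} [AddCommGroup W] [Module F W] (Qt : QuadraticForm F W) :
    Set (W →ₗ[F] W) :=
  {φ | Function.Bijective φ ∧ (∀ w, Qt (φ w) = Qt w) ∧
    ∀ w ∈ LinearMap.ker Qt.polarBilin, φ w = w}

/-- The `β`-image `AO(V,Q)^β` of the motion group of `(V,Q)`. -/
def motionBetaSet (Q : QuadraticForm F V) :
    Set ((F × Module.Dual F V) →ₗ[F] (F × Module.Dual F V)) :=
  {φ | ∃ (g : V ≃ₗ[F] V) (t : V), (∀ x, Q (g x) = Q x) ∧ φ = betaMap g t}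

/-- The `β`-image `AO'(V,Q)^β` of the weak motion group of `(V,Q)`. -/
def wMotionBetaSet (Q : QuadraticForm F V) :
    Set ((F × Module.Dual F V) →ₗ[F] (F × Module.Dual F V)) :=
  {φ | ∃ (g : V ≃ₗ[F] V) (t : V), (∀ x, Q (g x) = Q x) ∧
    (∀ x ∈ LinearMap.ker Q.polarBilin, g x = x) ∧ φ = betaMap g t}

/-- Proposition 5.1(b): if `Q̃ (1,0*) = 0` and the radical of the polar form of `Q̃` is
`F·(1,0*)`, then `π ∘ D̃ ∘ π^T : V* → V` is invertible (there is a linear equivalence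
`T : V* ≃ V` with `⟨b, T a⟩ = B̃((0,a),(0,b))` for all `a, b ∈ V*`), and the quadratic
form `Q̃^↓ : x ↦ Q̃ (0, T⁻¹ x)` has a non-degenerate polar form. -/
theorem stmt11 (Qt : QuadraticForm F (F × Module.Dual F V))
    (h1 : Qt (1, 0) = 0)
    (h2 : LinearMap.ker Qt.polarBilin =
      Submodule.span F {((1 : F), (0 : Module.Dual F V))}) :
    (∃ T : Module.Dual F V ≃ₗ[F] V, ∀ a b : Module.Dual F V,
      b (T a) = Qt.polarBilin (0, a) (0, b)) ∧
    (∀ T : Module.Dual F V ≃ₗ[F] V,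
      (∀ a b : Module.Dual F V, b (T a) = Qt.polarBilin (0, a) (0, b)) →
      LinearMap.ker (qDown Qt T).polarBilin = ⊥) := by

  constructor
  · -- existence
    have hone : ((1 : F), (0 : Module.Dual F V)) ∈ LinearMap.ker Qt.polarBilin := by
      rw [h2]; exact Submodule.subset_span rfl
    let j : Module.Dual F V →ₗ[F] F × Module.Dual F V := LinearMap.inr F F _
    let S : Module.Dual F V →ₗ[F] Module.Dual F (Module.Dual F V) :=
      (Qt.polarBilin ∘ₗ j).compl₂ j
    have hSinj : Function.Injective S := by
      rw [← LinearMap.ker_eq_bot, LinearMap.ker_eq_bot']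
      intro a ha
      have hmem : ((0 : F), a) ∈ LinearMap.ker Qt.polarBilin := by
        rw [LinearMap.mem_ker]
        apply LinearMap.ext
        rintro ⟨x0, b⟩
        have hdecomp : (x0, b) = x0 • ((1:F), (0 : Module.Dual F V)) + (0, b) := by
          simp [Prod.ext_iff]
        rw [hdecomp]
        simp only [map_add, map_smul]
        have h1' : Qt.polarBilin (0, a) (1, 0) = 0 := by
          have hz : Qt.polarBilin ((1:F), (0 : Module.Dual F V)) ((0:F), a) = 0 := by
            rw [LinearMap.mem_ker] at hone
            rw [hone]; rfl
          rw [QuadraticMap.polarBilin_apply_apply] at hz ⊢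
          rw [QuadraticMap.polar_comm]; exact hz
        have h2' : Qt.polarBilin ((0:F), a) ((0:F), b) = 0 := by
          have := congrArg (fun f => f b) ha
          simpa [S, j] using this
        simp [h1', h2']
      rw [h2, Submodule.mem_span_singleton] at hmem
      obtain ⟨c, hc⟩ := hmem
      have : a = c • (0 : Module.Dual F V) := congrArg Prod.snd hc.symm
      simpa using this
    have hSbij : Function.Bijective S := by
      refine ⟨hSinj, ?_⟩
      have : Module.finrank F (Module.Dual F V) =
          Module.finrank F (Module.Dual F (Module.Dual F V)) :=
        (Subspace.dual_finrank_eq (K := F) (V := Module.Dual F V)).symm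
      exact (LinearMap.injective_iff_surjective_of_finrank_eq_finrank this).mp hSinj
    let T : Module.Dual F V ≃ₗ[F] V :=
      (LinearEquiv.ofBijective S hSbij).trans (Module.evalEquiv F V).symm
    refine ⟨T, fun a b => ?_⟩
    have : b (T a) = S a b := Module.apply_evalEquiv_symm_apply F V b (S a)
    simpa [S, j] using this
  · intro T hT
    rw [LinearMap.ker_eq_bot']
    intro x hx
    rw [← Module.forall_dual_apply_eq_zero_iff F x]
    intro φ
    have hpolar : ∀ y, QuadraticMap.polar (qDown Qt T) x y = (T.symm y) x := by
      intro y
      have : QuadraticMap.polar (qDown Qt T) x y =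
          QuadraticMap.polar Qt (0, T.symm x) (0, T.symm y) := by
        simp [qDown, QuadraticMap.polar, Prod.ext_iff]
      rw [this]
      have := hT (T.symm x) (T.symm y)
      simp only [LinearEquiv.apply_symm_apply] at this
      rw [← QuadraticMap.polarBilin_apply_apply, ← this]
    have := congrArg (fun f => f (T φ)) hx
    simp only [QuadraticMap.polarBilin_apply_apply, LinearMap.zero_apply] at this
    have h := hpolar (T φ)
    rw [this] at h
    simpa using h.symm
end

section
/- Let (V,Q) be a metric vector space such that the polar form B of Q is non-degenerate, let p ∈ V and let r ∈ V with Q(r) ≠ 0. Then the β-image of the affine Q-reflection ξ_{p,r} : x ↦ x − Q(r)⁻¹ B(r, x−p) r equals the Q^↑-reflection of ((F×V)*, Q^↑) in the direction of the vector (−B(r,p), D(r)) ∈ (F×V)*, where Q^↑(a₀,a*) := Q(D⁻¹(a*)). -/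
/-! Setting: a field `F` and a finite-dimensional `F`-vector space `V`. The dual of
`F × V` is identified with `F × V*` via the pairing `⟨(a₀,a*),(x₀,x)⟩ = a₀x₀ + ⟨a*,x⟩`.
For a quadratic form `Q`, its polar form is `QuadraticMap.polar Q` (the bilinear map
`Q.polarBilin`) and its radical is `LinearMap.ker Q.polarBilin`. -/

variable {F V : Type*} [Field F] [AddCommGroup V] [Module F V] [FiniteDimensional F V]

/-- Remark 5.4: if the polar form of `Q` is non-degenerate (its induced map being the
linear equivalence `e`), `p ∈ V` and `Q r ≠ 0`, then the `β`-image of the affine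
`Q`-reflection `ξ_{p,r} : x ↦ x - Q(r)⁻¹ B(r, x-p) r` (which is the affinity `x ↦ t + g x`
with linear part `g = ξ_r` and translation part `t = Q(r)⁻¹ B(r,p) r`) equals the
`Q^↑`-reflection of `((F×V)*, Q^↑)` in the direction of `(-B(r,p), D r) ∈ F × V*`. -/
theorem stmt19 (Q : QuadraticForm F V) (e : V ≃ₗ[F] Module.Dual F V)
    (he : (e : V →ₗ[F] Module.Dual F V) = Q.polarBilin)
    (p r : V) (hr : Q r ≠ 0)
    (g : V ≃ₗ[F] V)
    (hg : ∀ x : V, g x = x - (Q r)⁻¹ • Q.polarBilin r x • r) :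
    ∀ u : F × Module.Dual F V,
      betaMap g ((Q r)⁻¹ • Q.polarBilin r p • r) u =
        u - (qUp Q e (-(Q.polarBilin r p), Q.polarBilin r))⁻¹ •
          (qUp Q e).polarBilin (-(Q.polarBilin r p), Q.polarBilin r) u •
            ((-(Q.polarBilin r p), Q.polarBilin r) : F × Module.Dual F V) := by
  rintro ⟨u0, us⟩
  have her : e r = Q.polarBilin r := by rw [← he]; rfl
  have hsr : e.symm (Q.polarBilin r) = r := by rw [← her, e.symm_apply_apply]
  have h2 : Q.polarBilin r r = Q r + Q r := by
    simp [QuadraticMap.polar_self, two_smul]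
  have hQup : qUp Q e (-(Q.polarBilin r p), Q.polarBilin r) = Q r := by
    simp [qUp, QuadraticMap.comp_apply, hsr]
  have hus : QuadraticMap.polar Q r (e.symm us) = us r := by
    rw [QuadraticMap.polar_comm, ← QuadraticMap.polarBilin_apply_apply, ← he]
    simp
  have hpol : (qUp Q e).polarBilin (-(Q.polarBilin r p), Q.polarBilin r) (u0, us) = us r := by
    have hc : ∀ w : F × Module.Dual F V, qUp Q e w = Q (e.symm w.2) := fun w => rfl
    simp only [QuadraticMap.polarBilin_apply_apply, QuadraticMap.polar, hc,
      Prod.snd_add, map_add, hsr]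
    exact hus
  have hgsymm : ∀ x, g.symm x = x - (Q r)⁻¹ • Q.polarBilin r x • r := by
    intro x
    apply g.injective
    rw [g.apply_symm_apply, hg]
    simp only [map_sub, map_smul, smul_eq_mul, h2]
    have hs : Q.polarBilin r x - (Q r)⁻¹ * (Q.polarBilin r x * (Q r + Q r))
        = - Q.polarBilin r x := by
      field_simp; ring
    rw [hs]
    module
  rw [hQup, hpol]
  have hbeta : betaMap g ((Q r)⁻¹ • Q.polarBilin r p • r) (u0, us) =
      (u0 - us (g.symm ((Q r)⁻¹ • Q.polarBilin r p • r)),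
        us ∘ₗ g.symm.toLinearMap) := rfl
  rw [hbeta]
  have harr : g.symm ((Q r)⁻¹ • Q.polarBilin r p • r)
      = -((Q r)⁻¹ • Q.polarBilin r p • r) := by
    rw [hgsymm]
    simp only [map_smul, smul_eq_mul, h2]
    have hs : (Q r)⁻¹ * (Q.polarBilin r p * (Q r + Q r)) = 2 * Q.polarBilin r p := by
      field_simp; ring
    rw [hs]
    module
  rw [harr]
  ext
  · simp only [map_neg, map_smul, smul_eq_mul, Prod.fst_sub, Prod.smul_fst, Prod.fst_neg]
    ring
  · rename_i x
    simp only [LinearMap.coe_comp, Function.comp_apply, LinearEquiv.coe_coe,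
      Prod.snd_sub, Prod.smul_snd, LinearMap.sub_apply, LinearMap.smul_apply,
      smul_eq_mul, hgsymm, map_sub, map_smul]
    ring
end
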